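/- arXiv:2604.01242 — 2 statements merged into one kernel-verified Lean document; each statement's English description precedes it below -/
import Mathlib

section
/- Let n be a positive integer and let E : ℝⁿ → ℝ be continuous with a unique global minimizer u* (so E(u*) < E(u) for all u ≠ u*). Assume that (i) for every δ > 0, the infimum of E over {u : ‖u − u*‖ ≥ δ} is strictly greater than E(u*), and (ii) there exists ε₀ > 0 such that u ↦ exp(−E(u)/ε₀) is Lebesgue-integrable on ℝⁿ. For each ε ∈ (0, ε₀], let μ_ε be the probability measure on ℝⁿ with density exp(−E(u)/ε) / Z_ε, where Z_ε = ∫ exp(−E(u)/ε) du. Then μ_ε converges weakly to the Dirac measure at u* as ε → 0⁺; equivalently, for every bounded continuous g : ℝⁿ → ℝ, ∫ g dμ_ε → g(u*). -/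
open MeasureTheory Filter

/-- As the temperature `ε → 0⁺`, the Gibbs measures with density
`exp(-E(u)/ε)/Z_ε` concentrate on the unique global minimizer `u*` of `E`:
integrals of every bounded continuous function converge to its value at `u*`
(weak convergence to the Dirac measure at `u*`). -/
theorem gibbs_measure_concentration
    (n : ℕ) (hn : 0 < n)
    (E : EuclideanSpace ℝ (Fin n) → ℝ) (hE : Continuous E)
    (ustar : EuclideanSpace ℝ (Fin n))
    (hmin : ∀ u, u ≠ ustar → E ustar < E u)
    (hcoercive : ∀ δ : ℝ, 0 < δ →
      ∃ c : ℝ, E ustar < c ∧ ∀ u, δ ≤ ‖u - ustar‖ → c ≤ E u)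
    (ε₀ : ℝ) (hε₀ : 0 < ε₀)
    (hint : Integrable (fun u => Real.exp (-E u / ε₀)) volume)
    (Z : ℝ → ℝ) (hZ : ∀ ε, Z ε = ∫ u, Real.exp (-E u / ε) ∂volume)
    (μ : ℝ → Measure (EuclideanSpace ℝ (Fin n)))
    (hμ : ∀ ε, μ ε = volume.withDensity
      (fun u => ENNReal.ofReal (Real.exp (-E u / ε) / Z ε))) :
    ∀ g : BoundedContinuousFunction (EuclideanSpace ℝ (Fin n)) ℝ,
      Tendsto (fun ε => ∫ u, g u ∂(μ ε)) (nhdsWithin 0 (Set.Ioc 0 ε₀))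
        (nhds (g ustar)) := by
  intro g
  set m := E ustar with hm
  have hmle : ∀ u, m ≤ E u := by
    intro u
    rcases eq_or_ne u ustar with h | h
    · simp [h, hm]
    · exact (hmin u h).le
  -- integrability of the Boltzmann factor for all ε ∈ (0, ε₀]
  have key_int : ∀ ε ∈ Set.Ioc (0:ℝ) ε₀, Integrable (fun u => Real.exp (-E u / ε)) volume := by
    rintro ε ⟨hε1, hε2⟩
    refine (hint.const_mul (Real.exp (m/ε₀ - m/ε))).mono'
      ((hE.neg.div_const ε).rexp.aestronglyMeasurable) (.of_forall fun u => ?_)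
    rw [Real.norm_eq_abs, abs_of_pos (Real.exp_pos _), ← Real.exp_add]
    apply Real.exp_le_exp.2
    have h1 : (1:ℝ)/ε₀ - 1/ε ≤ 0 := by
      have : 1/ε₀ ≤ 1/ε := one_div_le_one_div_of_le hε1 hε2
      linarith
    have h2 : E u / ε₀ - E u / ε ≤ m / ε₀ - m / ε := by
      have := mul_le_mul_of_nonpos_right (hmle u) h1
      simp only [mul_sub, mul_one_div] at this
      linarith
    simp only [neg_div]
    linarith
  -- positivity of the partition function
  have hZpos : ∀ ε ∈ Set.Ioc (0:ℝ) ε₀, 0 < Z ε := by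
    intro ε hε
    rw [hZ]
    rw [integral_pos_iff_support_of_nonneg (fun u => (Real.exp_pos _).le) (key_int ε hε)]
    have hsupp : Function.support (fun u : EuclideanSpace ℝ (Fin n) => Real.exp (-E u / ε))
        = Set.univ := Set.eq_univ_of_forall fun u => (Real.exp_pos _).ne'
    rw [hsupp]
    exact isOpen_univ.measure_pos volume ⟨ustar, trivial⟩
  -- rewriting the integral against μ ε
  have hgint : ∀ ε ∈ Set.Ioc (0:ℝ) ε₀,
      ∫ u, g u ∂(μ ε) = ∫ u, (Real.exp (-E u / ε) / Z ε) * g u := by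
    intro ε hε
    rw [hμ]
    have hmeas : Measurable fun u : EuclideanSpace ℝ (Fin n) =>
        (Real.exp (-E u / ε) / Z ε).toNNReal :=
      (((hE.neg.div_const ε).rexp.div_const (Z ε)).measurable).real_toNNReal
    simp only [ENNReal.ofReal]
    rw [integral_withDensity_eq_integral_smul hmeas]
    refine integral_congr_ae (.of_forall fun u => ?_)
    simp only [NNReal.smul_def, smul_eq_mul]
    rw [Real.coe_toNNReal _ (div_nonneg (Real.exp_pos _).le (hZpos ε hε).le)]
  -- total mass 1
  have hmass : ∀ ε ∈ Set.Ioc (0:ℝ) ε₀, ∫ u, Real.exp (-E u / ε) / Z ε = 1 := by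
    intro ε hε
    rw [integral_div, ← hZ, div_self (hZpos ε hε).ne']
  rw [Metric.tendsto_nhds]
  intro η hη
  -- choose δ from continuity of g at ustar
  obtain ⟨δ, hδ, hgδ⟩ := Metric.continuousAt_iff.1 (g.continuous.continuousAt (x := ustar)) (η/2)
    (by positivity)
  obtain ⟨c, hc1, hc2⟩ := hcoercive δ hδ
  set a : ℝ := (c - m)/2 with ha_def
  have ha : 0 < a := by simp only [ha_def]; linarith
  -- small ball where E < m + a
  obtain ⟨r, hr, hEr⟩ := Metric.continuousAt_iff.1 (hE.continuousAt (x := ustar)) a ha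
  set V : ℝ := (volume (Metric.ball ustar r)).toReal with hV_def
  have hVpos : 0 < V :=
    ENNReal.toReal_pos (Metric.measure_ball_pos volume ustar hr).ne' measure_ball_lt_top.ne
  set I₀ : ℝ := Z ε₀ with hI₀_def
  have hI₀pos : 0 < I₀ := hZpos ε₀ ⟨hε₀, le_refl _⟩
  set C : ℝ := I₀ / V * Real.exp (c/ε₀) with hC_def
  have hCpos : 0 < C := by positivity
  -- denominator lower bound
  have hden : ∀ ε ∈ Set.Ioc (0:ℝ) ε₀, Real.exp (-(m+a)/ε) * V ≤ Z ε := by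
    rintro ε hε
    obtain ⟨hε1, hε2⟩ := hε
    rw [hZ]
    calc Real.exp (-(m+a)/ε) * V
        ≤ ∫ u in Metric.ball ustar r, Real.exp (-E u / ε) := by
          refine setIntegral_ge_of_const_le_real measurableSet_ball measure_ball_lt_top.ne
            (fun u hu => ?_) (key_int ε ⟨hε1, hε2⟩).integrableOn
          apply Real.exp_le_exp.2
          have hEu : E u < m + a := by
            have := hEr (by simpa [Metric.mem_ball] using hu)
            rw [Real.dist_eq, abs_lt] at this
            linarith [this.1, this.2]
          gcongr
          all_goals linarith
      _ ≤ ∫ u, Real.exp (-E u / ε) :=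
          setIntegral_le_integral (key_int ε ⟨hε1, hε2⟩)
            (.of_forall fun u => (Real.exp_pos _).le)
  -- the far set
  set S : Set (EuclideanSpace ℝ (Fin n)) := {u | δ ≤ ‖u - ustar‖} with hS_def
  have hS : MeasurableSet S :=
    (isClosed_le continuous_const ((continuous_id.sub continuous_const).norm)).measurableSet
  -- numerator upper bound on S
  have hnum : ∀ ε ∈ Set.Ioc (0:ℝ) ε₀,
      ∫ u in S, Real.exp (-E u / ε) ≤ Real.exp (-c/ε + c/ε₀) * I₀ := by
    rintro ε ⟨hε1, hε2⟩
    have h1 : (1:ℝ)/ε₀ - 1/ε ≤ 0 := by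
      have : 1/ε₀ ≤ 1/ε := one_div_le_one_div_of_le hε1 hε2
      linarith
    calc ∫ u in S, Real.exp (-E u / ε)
        ≤ ∫ u in S, Real.exp (-c/ε + c/ε₀) * Real.exp (-E u / ε₀) := by
          refine setIntegral_mono_on (key_int ε ⟨hε1, hε2⟩).integrableOn
            ((hint.const_mul _).integrableOn) hS (fun u hu => ?_)
          rw [← Real.exp_add]
          apply Real.exp_le_exp.2
          have hcu : c ≤ E u := hc2 u hu
          have h2 : E u / ε₀ - E u / ε ≤ c / ε₀ - c / ε := by
            have := mul_le_mul_of_nonpos_right hcu h1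
            simp only [mul_sub, mul_one_div] at this
            linarith
          simp only [neg_div]
          linarith
      _ = Real.exp (-c/ε + c/ε₀) * ∫ u in S, Real.exp (-E u / ε₀) := integral_const_mul _ _
      _ ≤ Real.exp (-c/ε + c/ε₀) * I₀ := by
          rw [hI₀_def, hZ]
          exact mul_le_mul_of_nonneg_left
            (setIntegral_le_integral hint (.of_forall fun u => (Real.exp_pos _).le))
            (Real.exp_pos _).le
  -- tail mass bound
  have htailbd : ∀ ε ∈ Set.Ioc (0:ℝ) ε₀,
      ∫ u in S, Real.exp (-E u / ε) / Z ε ≤ C * Real.exp (-a/ε) := by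
    intro ε hε
    rw [integral_div]
    have h1 : (∫ u in S, Real.exp (-E u / ε)) / Z ε
        ≤ (Real.exp (-c/ε + c/ε₀) * I₀) / (Real.exp (-(m+a)/ε) * V) := by
      apply div_le_div₀ (by positivity) (hnum ε hε) (by positivity) (hden ε hε)
    refine h1.trans_eq ?_
    obtain ⟨hε1, _⟩ := hε
    have e1 : Real.exp (-c/ε + c/ε₀)
        = Real.exp (-(m+a)/ε) * (Real.exp (c/ε₀) * Real.exp (-a/ε)) := by
      rw [← Real.exp_add, ← Real.exp_add]
      congr 1
      rw [ha_def]
      field_simp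
      ring
    rw [e1, hC_def]
    field_simp
  -- the tail tends to 0
  have htail0 : Tendsto (fun ε => 2 * ‖g‖ * (C * Real.exp (-a/ε)))
      (nhdsWithin 0 (Set.Ioc 0 ε₀)) (nhds 0) := by
    have h1 : Tendsto (fun ε : ℝ => -a/ε) (nhdsWithin 0 (Set.Ioi 0)) atBot := by
      have h2 : Tendsto (fun ε : ℝ => a * ε⁻¹) (nhdsWithin 0 (Set.Ioi 0)) atTop :=
        (tendsto_inv_nhdsGT_zero).const_mul_atTop ha
      have h3 : Tendsto (fun ε : ℝ => -(a * ε⁻¹)) (nhdsWithin 0 (Set.Ioi 0)) atBot :=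
        tendsto_neg_atTop_atBot.comp h2
      refine h3.congr fun ε => by rw [neg_div, div_eq_mul_inv]
    have h4 : Tendsto (fun ε : ℝ => Real.exp (-a/ε)) (nhdsWithin 0 (Set.Ioi 0)) (nhds 0) :=
      Real.tendsto_exp_atBot.comp h1
    have h5 : Tendsto (fun ε : ℝ => Real.exp (-a/ε)) (nhdsWithin 0 (Set.Ioc 0 ε₀)) (nhds 0) :=
      h4.mono_left (nhdsWithin_mono 0 Set.Ioc_subset_Ioi_self)
    have := h5.const_mul (2 * ‖g‖ * C)
    simpa [mul_assoc] using this
  have hev : ∀ᶠ ε in nhdsWithin 0 (Set.Ioc 0 ε₀),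
      2 * ‖g‖ * (C * Real.exp (-a/ε)) < η/2 :=
    htail0.eventually_lt_const (by positivity)
  filter_upwards [hev, self_mem_nhdsWithin] with ε hevε hεmem
  -- now the main estimate for fixed ε
  set d : EuclideanSpace ℝ (Fin n) → ℝ := fun u => Real.exp (-E u / ε) / Z ε with hd_def
  have hd_nonneg : ∀ u, 0 ≤ d u := fun u =>
    div_nonneg (Real.exp_pos _).le (hZpos ε hεmem).le
  have hd_int : Integrable d volume := (key_int ε hεmem).div_const _
  have hdg_int : Integrable (fun u => d u * g u) volume := by
    have := hd_int.bdd_mul g.continuous.aestronglyMeasurable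
      (.of_forall fun u => g.norm_coe_le_norm u)
    simpa [mul_comm] using this
  rw [Real.dist_eq, hgint ε hεmem]
  have heq : (∫ u, d u * g u) - g ustar = ∫ u, d u * (g u - g ustar) := by
    rw [show (fun u => d u * (g u - g ustar)) = fun u => d u * g u - d u * g ustar by
      funext u; ring]
    rw [integral_sub hdg_int (hd_int.mul_const _), integral_mul_const, hmass ε hεmem, one_mul]
  rw [show (∫ u, d u * g u) - g ustar = ∫ u, d u * (g u - g ustar) from heq]
  have hbig_int : Integrable (fun u => d u * (g u - g ustar)) volume := by
    rw [show (fun u => d u * (g u - g ustar)) = fun u => d u * g u - d u * g ustar by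
      funext u; ring]
    exact hdg_int.sub (hd_int.mul_const _)
  have habs_int : Integrable (fun u => d u * |g u - g ustar|) volume := by
    refine hbig_int.abs.congr (.of_forall fun u => ?_)
    show |d u * (g u - g ustar)| = d u * |g u - g ustar|
    rw [abs_mul, abs_of_nonneg (hd_nonneg u)]
  have hnorm : |∫ u, d u * (g u - g ustar)| ≤ ∫ u, d u * |g u - g ustar| := by
    rw [← Real.norm_eq_abs]
    refine (norm_integral_le_integral_norm _).trans_eq ?_
    refine integral_congr_ae (.of_forall fun u => ?_)
    show ‖d u * (g u - g ustar)‖ = d u * |g u - g ustar|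
    rw [norm_mul, Real.norm_eq_abs, Real.norm_eq_abs, abs_of_nonneg (hd_nonneg u)]
  have hsplit : (∫ u, d u * |g u - g ustar|) =
      (∫ u in S, d u * |g u - g ustar|) + ∫ u in Sᶜ, d u * |g u - g ustar| :=
    (integral_add_compl hS habs_int).symm
  have hfar : ∫ u in S, d u * |g u - g ustar| ≤ 2 * ‖g‖ * (C * Real.exp (-a/ε)) := by
    calc ∫ u in S, d u * |g u - g ustar| ≤ ∫ u in S, 2 * ‖g‖ * d u := by
          refine setIntegral_mono_on habs_int.integrableOn
            ((hd_int.const_mul _).integrableOn) hS (fun u hu => ?_)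
          rw [mul_comm (2 * ‖g‖)]
          refine mul_le_mul_of_nonneg_left ?_ (hd_nonneg u)
          have h1 : ‖g u‖ ≤ ‖g‖ := g.norm_coe_le_norm u
          have h2 : ‖g ustar‖ ≤ ‖g‖ := g.norm_coe_le_norm ustar
          calc |g u - g ustar| ≤ ‖g u‖ + ‖g ustar‖ := by
                rw [← Real.norm_eq_abs]; exact norm_sub_le _ _
            _ ≤ 2 * ‖g‖ := by linarith
      _ = 2 * ‖g‖ * ∫ u in S, d u := integral_const_mul _ _
      _ ≤ 2 * ‖g‖ * (C * Real.exp (-a/ε)) :=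
          mul_le_mul_of_nonneg_left (htailbd ε hεmem) (by positivity)
  have hnear : ∫ u in Sᶜ, d u * |g u - g ustar| ≤ η/2 := by
    calc ∫ u in Sᶜ, d u * |g u - g ustar| ≤ ∫ u in Sᶜ, η/2 * d u := by
          refine setIntegral_mono_on habs_int.integrableOn
            ((hd_int.const_mul _).integrableOn) hS.compl (fun u hu => ?_)
          rw [mul_comm (η/2)]
          refine mul_le_mul_of_nonneg_left ?_ (hd_nonneg u)
          have hu' : ¬ δ ≤ ‖u - ustar‖ := hu
          have hd' : dist u ustar < δ := by rw [dist_eq_norm]; exact lt_of_not_ge hu'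
          have := hgδ hd'
          rw [Real.dist_eq] at this
          exact this.le
      _ = η/2 * ∫ u in Sᶜ, d u := integral_const_mul _ _
      _ ≤ η/2 * 1 := by
          refine mul_le_mul_of_nonneg_left ?_ (by positivity)
          exact le_trans (setIntegral_le_integral hd_int (.of_forall hd_nonneg))
            (hmass ε hεmem).le
      _ = η/2 := mul_one _
  calc |∫ u, d u * (g u - g ustar)| ≤ ∫ u, d u * |g u - g ustar| := hnorm
    _ = (∫ u in S, d u * |g u - g ustar|) + ∫ u in Sᶜ, d u * |g u - g ustar| := hsplit
    _ < η/2 + η/2 := add_lt_add_of_lt_of_le (lt_of_le_of_lt hfar hevε) hnear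
    _ = η := by ring
end

section
/- Let n be a positive integer and let E : ℝⁿ → ℝ be differentiable with gradient ∇E that is Lipschitz continuous with constant L ≥ 0. Let u ∈ ℝⁿ, Δt > 0, ε ≥ 0, and let ξ be a random vector in ℝⁿ whose coordinates are independent standard Gaussian real random variables. Then the one-step physics-guided update satisfies 𝔼[ E( u − Δt·∇E(u) + √(2εΔt)·ξ ) ] ≤ E(u) − Δt·(1 − L·Δt/2)·‖∇E(u)‖² + ε·L·Δt·n. -/
open MeasureTheory ProbabilityTheory

section GaussAux

private lemma pg_pdf_eq (x : ℝ) :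
    gaussianPDFReal 0 1 x = (Real.sqrt (2 * Real.pi))⁻¹ * Real.exp (-(1/2) * x ^ 2) := by
  simp only [gaussianPDFReal, NNReal.coe_one, mul_one, sub_zero]
  rw [show -x ^ 2 / 2 = -(1/2) * x ^ 2 by ring]

private lemma pg_gauss_integral_eq (g : ℝ → ℝ) :
    ∫ x, g x ∂(gaussianReal 0 1) = ∫ x, gaussianPDFReal 0 1 x * g x := by
  rw [gaussianReal_of_var_ne_zero 0 one_ne_zero]
  rw [show gaussianPDF 0 1 = fun x => ((Real.toNNReal (gaussianPDFReal 0 1 x)) : ENNReal) from rfl]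
  rw [integral_withDensity_eq_integral_smul (measurable_gaussianPDFReal 0 1).real_toNNReal g]
  congr 1; funext x
  rw [NNReal.smul_def, smul_eq_mul, Real.coe_toNNReal _ (gaussianPDFReal_nonneg 0 1 x)]

private lemma pg_gauss_integrable_iff (g : ℝ → ℝ) :
    Integrable g (gaussianReal 0 1) ↔
      Integrable (fun x => gaussianPDFReal 0 1 x * g x) (volume : Measure ℝ) := by
  rw [gaussianReal_of_var_ne_zero 0 one_ne_zero,
    show gaussianPDF 0 1 = fun x => ((Real.toNNReal (gaussianPDFReal 0 1 x)) : ENNReal) from rfl,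
    integrable_withDensity_iff_integrable_smul (measurable_gaussianPDFReal 0 1).real_toNNReal]
  apply integrable_congr
  filter_upwards with x
  rw [NNReal.smul_def, smul_eq_mul, Real.coe_toNNReal _ (gaussianPDFReal_nonneg 0 1 x)]

private lemma pg_gauss_integrable_id : Integrable (fun x : ℝ => x) (gaussianReal 0 1) := by
  rw [pg_gauss_integrable_iff]
  have h := (integrable_mul_exp_neg_mul_sq (b := 1/2) one_half_pos).const_mul
    ((Real.sqrt (2 * Real.pi))⁻¹)
  refine h.congr (Filter.Eventually.of_forall fun x => ?_)
  simp only [pg_pdf_eq]; ring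

private lemma pg_gauss_integrable_sq : Integrable (fun x : ℝ => x ^ 2) (gaussianReal 0 1) := by
  rw [pg_gauss_integrable_iff]
  have h0 := integrable_rpow_mul_exp_neg_mul_sq (b := 1/2) one_half_pos (s := 2) (by norm_num)
  have h1 : Integrable (fun x : ℝ => x ^ 2 * Real.exp (-(1/2) * x ^ 2)) (volume : Measure ℝ) := by
    refine h0.congr (Filter.Eventually.of_forall fun x => ?_)
    simp only [Real.rpow_two]
  refine (h1.const_mul ((Real.sqrt (2 * Real.pi))⁻¹)).congr
    (Filter.Eventually.of_forall fun x => ?_)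
  simp only [pg_pdf_eq]; ring

private lemma pg_odd_zero : ∫ x : ℝ, x * Real.exp (-(1/2) * x ^ 2) = 0 := by
  have h := Measure.integral_comp_mul_left
    (fun t : ℝ => t * Real.exp (-(1/2) * t ^ 2)) (-1)
  have h2 : (fun x : ℝ => (fun t : ℝ => t * Real.exp (-(1/2) * t ^ 2)) (-1 * x))
      = fun x : ℝ => -(x * Real.exp (-(1/2) * x ^ 2)) := by
    funext x
    simp only [neg_one_mul, neg_sq]
    ring
  rw [h2, integral_neg] at h
  simp only [inv_neg, inv_one, abs_neg, abs_one, one_smul] at h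
  linarith

private lemma pg_int_sq_Ioi : ∫ x in Set.Ioi (0:ℝ), x ^ 2 * Real.exp (-x ^ 2)
    = Real.sqrt Real.pi / 4 := by
  have h := integral_rpow_mul_exp_neg_rpow (p := 2) (q := 2) two_pos (by norm_num)
  simp only [Real.rpow_two] at h
  rw [h, show ((2:ℝ)+1)/2 = 1/2 + 1 by norm_num, Real.Gamma_add_one (by norm_num),
    Real.Gamma_one_half_eq]
  ring

private lemma pg_int_sq_full : ∫ x : ℝ, x ^ 2 * Real.exp (-x ^ 2) = Real.sqrt Real.pi / 2 := by
  have h3 := integral_comp_abs (f := fun t : ℝ => t ^ 2 * Real.exp (-t ^ 2))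
  simp only [sq_abs] at h3
  rw [h3, pg_int_sq_Ioi]
  ring

private lemma pg_int_sq_half :
    ∫ x : ℝ, x ^ 2 * Real.exp (-(1/2) * x ^ 2) = Real.sqrt (2 * Real.pi) := by
  have hs2 : (0:ℝ) < Real.sqrt 2 := Real.sqrt_pos.mpr two_pos
  have h := Measure.integral_comp_mul_left
    (fun t : ℝ => t ^ 2 * Real.exp (-t ^ 2)) ((Real.sqrt 2)⁻¹)
  have hsq : ∀ x : ℝ, ((Real.sqrt 2)⁻¹ * x) ^ 2 = (1/2) * x ^ 2 := by
    intro x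
    rw [mul_pow, ← Real.sqrt_inv, Real.sq_sqrt (by norm_num)]
    ring
  have h' : ∫ x : ℝ, (1/2) * x ^ 2 * Real.exp (-((1/2) * x ^ 2))
      = Real.sqrt 2 * (Real.sqrt Real.pi / 2) := by
    have heq : (fun x : ℝ => (1/2) * x ^ 2 * Real.exp (-((1/2) * x ^ 2)))
        = fun x : ℝ => ((Real.sqrt 2)⁻¹ * x) ^ 2 * Real.exp (-((Real.sqrt 2)⁻¹ * x) ^ 2) := by
      funext x; rw [hsq]
    rw [heq, h, pg_int_sq_full, inv_inv, abs_of_pos hs2, smul_eq_mul]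
  have hlhs : ∫ x : ℝ, (1/2) * x ^ 2 * Real.exp (-((1/2) * x ^ 2))
      = (1/2) * ∫ x : ℝ, x ^ 2 * Real.exp (-(1/2) * x ^ 2) := by
    rw [← integral_const_mul]
    congr 1; funext x; ring_nf
  rw [hlhs] at h'
  have : ∫ x : ℝ, x ^ 2 * Real.exp (-(1/2) * x ^ 2) = Real.sqrt 2 * Real.sqrt Real.pi := by
    linarith
  rw [this, ← Real.sqrt_mul (by norm_num)]

private lemma pg_sqrt_two_pi_pos : (0:ℝ) < Real.sqrt (2 * Real.pi) :=
  Real.sqrt_pos.mpr (by positivity)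

private lemma pg_gauss_mean : ∫ x, x ∂(gaussianReal 0 1) = 0 := by
  rw [pg_gauss_integral_eq]
  have heq : (fun x : ℝ => gaussianPDFReal 0 1 x * x)
      = fun x : ℝ => (Real.sqrt (2 * Real.pi))⁻¹ * (x * Real.exp (-(1/2) * x ^ 2)) := by
    funext x; rw [pg_pdf_eq]; ring
  rw [heq, integral_const_mul, pg_odd_zero, mul_zero]

private lemma pg_gauss_sq : ∫ x, x ^ 2 ∂(gaussianReal 0 1) = 1 := by
  rw [pg_gauss_integral_eq]
  have heq : (fun x : ℝ => gaussianPDFReal 0 1 x * x ^ 2)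
      = fun x : ℝ => (Real.sqrt (2 * Real.pi))⁻¹ * (x ^ 2 * Real.exp (-(1/2) * x ^ 2)) := by
    funext x; rw [pg_pdf_eq]; ring
  rw [heq, integral_const_mul, pg_int_sq_half,
    inv_mul_cancel₀ (ne_of_gt pg_sqrt_two_pi_pos)]

end GaussAux

section DescentAux

private lemma pg_descent {H : Type*} [NormedAddCommGroup H] [InnerProductSpace ℝ H]
    [CompleteSpace H]
    (E : H → ℝ) (g : H → H) (hgrad : ∀ x, HasGradientAt E (g x) x)
    (L : ℝ) (hL : 0 ≤ L) (hLip : ∀ x y, ‖g x - g y‖ ≤ L * ‖x - y‖)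
    (x y : H) :
    |E y - E x - (inner ℝ (g x) (y - x) : ℝ)| ≤ L / 2 * ‖y - x‖ ^ 2 := by
  set v := y - x with hv
  have hcont : Continuous g := by
    have hlw : LipschitzWith (Real.toNNReal L) g := by
      apply LipschitzWith.of_dist_le_mul
      intro a b
      rw [Real.coe_toNNReal _ hL]
      simpa [dist_eq_norm] using hLip a b
    exact hlw.continuous
  have hline : ∀ t : ℝ, HasDerivAt (fun s : ℝ => E (x + s • v))
      ((inner ℝ (g (x + t • v)) v : ℝ)) t := by
    intro t
    have h1 : HasDerivAt (fun s : ℝ => x + s • v) v t := by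
      simpa using ((hasDerivAt_id t).smul_const v).const_add x
    have h2 := (hgrad (x + t • v)).hasFDerivAt.comp_hasDerivAt t h1
    simp only [InnerProductSpace.toDual_apply_apply] at h2
    exact h2
  have hcont2 : Continuous fun t : ℝ => (inner ℝ (g (x + t • v)) v : ℝ) := by
    exact (hcont.comp (by continuity)).inner continuous_const
  have hFTC : ∫ t in (0:ℝ)..1, (inner ℝ (g (x + t • v)) v : ℝ) = E y - E x := by
    have h := intervalIntegral.integral_eq_sub_of_hasDerivAt
      (f := fun s : ℝ => E (x + s • v))
      (f' := fun t : ℝ => (inner ℝ (g (x + t • v)) v : ℝ))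
      (fun t _ => hline t) (hcont2.intervalIntegrable 0 1)
    simpa [hv] using h
  have key : E y - E x - (inner ℝ (g x) v : ℝ)
      = ∫ t in (0:ℝ)..1, ((inner ℝ (g (x + t • v)) v : ℝ) - (inner ℝ (g x) v : ℝ)) := by
    rw [intervalIntegral.integral_sub (hcont2.intervalIntegrable 0 1)
      intervalIntegrable_const, hFTC, intervalIntegral.integral_const]
    simp
  rw [key]
  have habs : |∫ t in (0:ℝ)..1, ((inner ℝ (g (x + t • v)) v : ℝ) - (inner ℝ (g x) v : ℝ))|
      ≤ |∫ t in (0:ℝ)..1, L * ‖v‖ ^ 2 * t| := by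
    rw [← Real.norm_eq_abs]
    refine le_trans ?_ (le_abs_self _)
    apply intervalIntegral.norm_integral_le_of_norm_le (zero_le_one' ℝ)
    · filter_upwards with t ht
      have ht0 : 0 < t := ht.1
      have h1 : (inner ℝ (g (x + t • v)) v : ℝ) - (inner ℝ (g x) v : ℝ)
          = (inner ℝ (g (x + t • v) - g x) v : ℝ) := by rw [inner_sub_left]
      rw [h1, Real.norm_eq_abs]
      calc |(inner ℝ (g (x + t • v) - g x) v : ℝ)|
          ≤ ‖g (x + t • v) - g x‖ * ‖v‖ := abs_real_inner_le_norm _ _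
        _ ≤ (L * ‖x + t • v - x‖) * ‖v‖ :=
            mul_le_mul_of_nonneg_right (hLip _ _) (norm_nonneg _)
        _ = L * ‖v‖ ^ 2 * t := by
            rw [add_sub_cancel_left, norm_smul, Real.norm_eq_abs, abs_of_pos ht0]
            ring
    · exact (Continuous.intervalIntegrable (by continuity) 0 1)
  have hval : ∫ t in (0:ℝ)..1, L * ‖v‖ ^ 2 * t = L * ‖v‖ ^ 2 / 2 := by
    rw [intervalIntegral.integral_const_mul, integral_id]
    ring
  rw [hval] at habs
  calc |∫ t in (0:ℝ)..1, ((inner ℝ (g (x + t • v)) v : ℝ) - (inner ℝ (g x) v : ℝ))|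
      ≤ |L * ‖v‖ ^ 2 / 2| := habs
    _ = L / 2 * ‖v‖ ^ 2 := by
        rw [abs_of_nonneg (by positivity)]; ring

end DescentAux

set_option maxHeartbeats 1000000 in
/-- One-step expected descent of the physics-guided (noisy gradient) update:
if `∇E` is `L`-Lipschitz and `ξ` has independent standard Gaussian
coordinates, then
`𝔼[E(u - Δt∇E(u) + √(2εΔt)ξ)] ≤ E(u) - Δt(1 - LΔt/2)‖∇E(u)‖² + εLΔt·n`. -/
theorem physics_guided_step_expected_descent
    {Ω : Type*} [MeasurableSpace Ω] (P : Measure Ω) [IsProbabilityMeasure P]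
    (n : ℕ) (hn : 0 < n)
    (E : EuclideanSpace ℝ (Fin n) → ℝ)
    (g : EuclideanSpace ℝ (Fin n) → EuclideanSpace ℝ (Fin n))
    (hgrad : ∀ x, HasGradientAt E (g x) x)
    (L : ℝ) (hL : 0 ≤ L)
    (hLip : ∀ x y, ‖g x - g y‖ ≤ L * ‖x - y‖)
    (u : EuclideanSpace ℝ (Fin n)) (Δt : ℝ) (hΔt : 0 < Δt) (ε : ℝ) (hε : 0 ≤ ε)
    (ξ : Ω → EuclideanSpace ℝ (Fin n))
    (hξmeas : Measurable ξ)
    (hξindep : iIndepFun (fun i ω => ξ ω i) P)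
    (hξlaw : ∀ i : Fin n, Measure.map (fun ω => ξ ω i) P = gaussianReal 0 1) :
    ∫ ω, E (u - Δt • g u + Real.sqrt (2 * ε * Δt) • ξ ω) ∂P ≤
      E u - Δt * (1 - L * Δt / 2) * ‖g u‖ ^ 2 + ε * L * Δt * n := by
  classical
  set σ : ℝ := Real.sqrt (2 * ε * Δt) with hσdef
  have hσ0 : 0 ≤ σ := Real.sqrt_nonneg _
  have hσ2 : σ ^ 2 = 2 * ε * Δt := Real.sq_sqrt (by positivity)
  set y : Ω → EuclideanSpace ℝ (Fin n) := fun ω => u - Δt • g u + σ • ξ ω with hydef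
  have hyu : ∀ ω, y ω - u = -(Δt • g u) + σ • ξ ω := by
    intro ω
    show u - Δt • g u + σ • ξ ω - u = -(Δt • g u) + σ • ξ ω
    rw [sub_eq_add_neg u, add_assoc, add_sub_cancel_left]
  -- coordinate facts
  have hξi : ∀ i : Fin n, Measurable fun ω => ξ ω i := fun i =>
    (measurable_pi_apply i).comp ((WithLp.measurable_ofLp 2 _).comp hξmeas)
  have hInt_coord : ∀ i : Fin n, Integrable (fun ω => ξ ω i) P := by
    intro i
    have h := pg_gauss_integrable_id
    rw [← hξlaw i] at h
    exact (integrable_map_measure aestronglyMeasurable_id (hξi i).aemeasurable).mp h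
  have hInt_coord_sq : ∀ i : Fin n, Integrable (fun ω => (ξ ω i) ^ 2) P := by
    intro i
    have h := pg_gauss_integrable_sq
    rw [← hξlaw i] at h
    exact (integrable_map_measure
      (measurable_id.pow_const 2).aestronglyMeasurable (hξi i).aemeasurable).mp h
  have hE_coord : ∀ i : Fin n, ∫ ω, ξ ω i ∂P = 0 := by
    intro i
    have h := MeasureTheory.integral_map (μ := P) (f := fun t : ℝ => t)
      (hξi i).aemeasurable aestronglyMeasurable_id
    rw [hξlaw i] at h
    rw [← h, pg_gauss_mean]
  have hE_coord_sq : ∀ i : Fin n, ∫ ω, (ξ ω i) ^ 2 ∂P = 1 := by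
    intro i
    have h := MeasureTheory.integral_map (μ := P) (f := fun t : ℝ => t ^ 2)
      (hξi i).aemeasurable (measurable_id.pow_const 2).aestronglyMeasurable
    rw [hξlaw i] at h
    rw [← h, pg_gauss_sq]
  -- norm and inner expansions over coordinates
  have hnormsq : ∀ x : EuclideanSpace ℝ (Fin n), ‖x‖ ^ 2 = ∑ i, (x i) ^ 2 := by
    intro x
    rw [EuclideanSpace.norm_eq, Real.sq_sqrt (by positivity)]
    simp [sq_abs]
  have hinner : ∀ x : EuclideanSpace ℝ (Fin n), ∀ ω,
      (inner ℝ x (ξ ω) : ℝ) = ∑ i, x i * ξ ω i := by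
    intro x ω
    simp [PiLp.inner_apply, RCLike.inner_apply, mul_comm]
  have hInt_normsq : Integrable (fun ω => ‖ξ ω‖ ^ 2) P := by
    have : (fun ω => ‖ξ ω‖ ^ 2) = fun ω => ∑ i, (ξ ω i) ^ 2 := by
      funext ω; exact hnormsq (ξ ω)
    rw [this]
    exact integrable_finset_sum _ fun i _ => hInt_coord_sq i
  have hE_normsq : ∫ ω, ‖ξ ω‖ ^ 2 ∂P = (n : ℝ) := by
    have h : (fun ω => ‖ξ ω‖ ^ 2) = fun ω => ∑ i, (ξ ω i) ^ 2 := by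
      funext ω; exact hnormsq (ξ ω)
    rw [h, integral_finset_sum _ fun i _ => hInt_coord_sq i]
    simp [hE_coord_sq]
  have hInt_inner : Integrable (fun ω => (inner ℝ (g u) (ξ ω) : ℝ)) P := by
    have h : (fun ω => (inner ℝ (g u) (ξ ω) : ℝ)) = fun ω => ∑ i, g u i * ξ ω i := by
      funext ω; exact hinner (g u) ω
    rw [h]
    exact integrable_finset_sum _ fun i _ => (hInt_coord i).const_mul _
  have hE_inner : ∫ ω, (inner ℝ (g u) (ξ ω) : ℝ) ∂P = 0 := by
    have h : (fun ω => (inner ℝ (g u) (ξ ω) : ℝ)) = fun ω => ∑ i, g u i * ξ ω i := by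
      funext ω; exact hinner (g u) ω
    rw [h, integral_finset_sum _ fun i _ => (hInt_coord i).const_mul _]
    simp [integral_const_mul, hE_coord]
  have hInt_norm : Integrable (fun ω => ‖ξ ω‖) P := by
    have hbound : Integrable (fun ω => 1 + ‖ξ ω‖ ^ 2) P := (integrable_const 1).add hInt_normsq
    refine Integrable.mono' hbound hξmeas.norm.aestronglyMeasurable ?_
    filter_upwards with ω
    rw [norm_norm]
    nlinarith [norm_nonneg (ξ ω), sq_nonneg (‖ξ ω‖ - 1)]
  -- pointwise descent bound
  have hvexp : ∀ ω, (inner ℝ (g u) (y ω - u) : ℝ)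
      = -(Δt * ‖g u‖ ^ 2) + σ * (inner ℝ (g u) (ξ ω) : ℝ) := by
    intro ω
    rw [hyu ω, inner_add_right, inner_neg_right, real_inner_smul_right,
      real_inner_smul_right, real_inner_self_eq_norm_sq]
  have hnexp : ∀ ω, ‖y ω - u‖ ^ 2
      = Δt ^ 2 * ‖g u‖ ^ 2 - 2 * Δt * σ * (inner ℝ (g u) (ξ ω) : ℝ) + σ ^ 2 * ‖ξ ω‖ ^ 2 := by
    intro ω
    rw [hyu ω, norm_add_sq_real]
    rw [inner_neg_left, real_inner_smul_left, real_inner_smul_right, norm_neg,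
      norm_smul, norm_smul, mul_pow, mul_pow]
    rw [Real.norm_eq_abs, Real.norm_eq_abs, sq_abs, sq_abs]
    ring
  have hvle : ∀ ω, ‖y ω - u‖ ≤ Δt * ‖g u‖ + σ * ‖ξ ω‖ := by
    intro ω
    rw [hyu ω]
    calc ‖-(Δt • g u) + σ • ξ ω‖ ≤ ‖-(Δt • g u)‖ + ‖σ • ξ ω‖ := norm_add_le _ _
      _ = Δt * ‖g u‖ + σ * ‖ξ ω‖ := by
          rw [norm_neg, norm_smul, norm_smul, Real.norm_eq_abs, Real.norm_eq_abs,
            abs_of_pos hΔt, abs_of_nonneg hσ0]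
  have hdesc := fun ω => pg_descent E g hgrad L hL hLip u (y ω)
  have hpt : ∀ ω, E (y ω) ≤ (E u - Δt * (1 - L * Δt / 2) * ‖g u‖ ^ 2)
      + (σ * (1 - L * Δt)) * (inner ℝ (g u) (ξ ω) : ℝ) + (ε * L * Δt) * ‖ξ ω‖ ^ 2 := by
    intro ω
    have h1 := (abs_le.mp (hdesc ω)).2
    rw [hvexp ω, hnexp ω, hσ2] at h1
    linarith [h1]
  -- integrability of the composed function
  have hEcont : Continuous E := by
    rw [continuous_iff_continuousAt]
    intro x
    exact (hgrad x).hasFDerivAt.continuousAt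
  have hymeas : Measurable y := by
    apply Measurable.add
    · exact measurable_const
    · exact (measurable_const_smul σ).comp hξmeas
  have hEy_meas : AEStronglyMeasurable (fun ω => E (y ω)) P :=
    (hEcont.measurable.comp hymeas).aestronglyMeasurable
  set a : ℝ := Δt * ‖g u‖ with hadef
  have ha0 : 0 ≤ a := by positivity
  set C0 : ℝ := |E u| + ‖g u‖ * a + L / 2 * a ^ 2 with hC0def
  set C1 : ℝ := ‖g u‖ * σ + L * a * σ with hC1def
  set C2 : ℝ := L / 2 * σ ^ 2 with hC2def
  have hIntG : Integrable (fun ω => C0 + C1 * ‖ξ ω‖ + C2 * ‖ξ ω‖ ^ 2) P :=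
    ((integrable_const C0).add (hInt_norm.const_mul C1)).add (hInt_normsq.const_mul C2)
  have hIntE : Integrable (fun ω => E (y ω)) P := by
    refine Integrable.mono' hIntG hEy_meas ?_
    filter_upwards with ω
    show ‖E (y ω)‖ ≤ C0 + C1 * ‖ξ ω‖ + C2 * ‖ξ ω‖ ^ 2
    rw [Real.norm_eq_abs]
    have h1 := abs_le.mp (hdesc ω)
    have hi : |(inner ℝ (g u) (y ω - u) : ℝ)| ≤ ‖g u‖ * ‖y ω - u‖ :=
      abs_real_inner_le_norm _ _
    have hi2 := abs_le.mp hi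
    have hvle' := hvle ω
    have hvnn : 0 ≤ ‖y ω - u‖ := norm_nonneg _
    have hsq : ‖y ω - u‖ ^ 2 ≤ (a + σ * ‖ξ ω‖) ^ 2 := by
      have := hvle' ; nlinarith [norm_nonneg (ξ ω)]
    have hgyv : ‖g u‖ * ‖y ω - u‖ ≤ ‖g u‖ * (a + σ * ‖ξ ω‖) :=
      mul_le_mul_of_nonneg_left (hvle') (norm_nonneg _)
    have hLsq : L / 2 * ‖y ω - u‖ ^ 2 ≤ L / 2 * (a + σ * ‖ξ ω‖) ^ 2 :=
      mul_le_mul_of_nonneg_left hsq (by positivity)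
    have heu1 : E u ≤ |E u| := le_abs_self _
    have heu2 : -|E u| ≤ E u := neg_abs_le _
    rw [abs_le]
    constructor
    · rw [hC0def, hC1def, hC2def]
      linarith [h1.1, hi2.1, hLsq, hgyv, heu2]
    · rw [hC0def, hC1def, hC2def]
      linarith [h1.2, hi2.2, hLsq, hgyv, heu1]
  -- integrate
  have hIntF : Integrable (fun ω => (E u - Δt * (1 - L * Δt / 2) * ‖g u‖ ^ 2)
      + (σ * (1 - L * Δt)) * (inner ℝ (g u) (ξ ω) : ℝ) + (ε * L * Δt) * ‖ξ ω‖ ^ 2) P :=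
    ((integrable_const _).add (hInt_inner.const_mul _)).add (hInt_normsq.const_mul _)
  have hmono := integral_mono hIntE hIntF hpt
  have hA : Integrable (fun _ : Ω => E u - Δt * (1 - L * Δt / 2) * ‖g u‖ ^ 2) P :=
    integrable_const _
  have hB : Integrable (fun ω => (σ * (1 - L * Δt)) * (inner ℝ (g u) (ξ ω) : ℝ)) P :=
    hInt_inner.const_mul _
  have hC : Integrable (fun ω => (ε * L * Δt) * ‖ξ ω‖ ^ 2) P := hInt_normsq.const_mul _
  have hAB : Integrable (fun ω => (E u - Δt * (1 - L * Δt / 2) * ‖g u‖ ^ 2)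
      + (σ * (1 - L * Δt)) * (inner ℝ (g u) (ξ ω) : ℝ)) P := hA.add hB
  have hFval : ∫ ω, ((E u - Δt * (1 - L * Δt / 2) * ‖g u‖ ^ 2)
      + (σ * (1 - L * Δt)) * (inner ℝ (g u) (ξ ω) : ℝ) + (ε * L * Δt) * ‖ξ ω‖ ^ 2) ∂P
      = E u - Δt * (1 - L * Δt / 2) * ‖g u‖ ^ 2 + ε * L * Δt * n := by
    calc ∫ ω, ((E u - Δt * (1 - L * Δt / 2) * ‖g u‖ ^ 2)
          + (σ * (1 - L * Δt)) * (inner ℝ (g u) (ξ ω) : ℝ) + (ε * L * Δt) * ‖ξ ω‖ ^ 2) ∂P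
        = (∫ ω, ((E u - Δt * (1 - L * Δt / 2) * ‖g u‖ ^ 2)
            + (σ * (1 - L * Δt)) * (inner ℝ (g u) (ξ ω) : ℝ)) ∂P)
          + ∫ ω, (ε * L * Δt) * ‖ξ ω‖ ^ 2 ∂P := integral_add hAB hC
      _ = ((∫ _ω, (E u - Δt * (1 - L * Δt / 2) * ‖g u‖ ^ 2) ∂P)
            + ∫ ω, (σ * (1 - L * Δt)) * (inner ℝ (g u) (ξ ω) : ℝ) ∂P)
          + ∫ ω, (ε * L * Δt) * ‖ξ ω‖ ^ 2 ∂P := by rw [integral_add hA hB]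
      _ = E u - Δt * (1 - L * Δt / 2) * ‖g u‖ ^ 2 + ε * L * Δt * n := by
          rw [integral_const, integral_const_mul, integral_const_mul, hE_inner, hE_normsq]
          simp
  rw [hFval] at hmono
  exact hmono
end
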